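/- Let n ≥ 1, let Δ ∈ ℂ with Δ ≠ 0, and let c ∈ ℂ satisfy c² = −1/Δ. Let D ⊆ ℂ be open, let w_0,…,w_{2n} : D → ℂ be differentiable, and let a_0,…,a_{2n} ∈ ℂ. Define f_i(z) := c·(w_i(cz) + w_{i+1}(cz)) (indices mod 2n+1) and α_i := c²·a_i. Then (w_0,…,w_{2n} | a_0,…,a_{2n}) satisfies the (2n+1)-cyclic dressing chain equations with shift Δ together with the first integral w_0(z) + ⋯ + w_{2n}(z) = −Δz/2 for all z ∈ D, if and only if (f_0,…,f_{2n} | α_0,…,α_{2n}) satisfies the A_{2n}-Painlevé system together with its normalizations f_0(z) + ⋯ + f_{2n}(z) = z and α_0 + ⋯ + α_{2n} = 1, at every z with cz ∈ D. -/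

import Mathlib

open Fin.NatCast

private lemma tele_sum (n : ℕ) (i : Fin (2 * n + 1)) (v : Fin (2 * n + 1) → ℂ) :
    ((∑ j ∈ Finset.range n, (v (i + ((2 * j + 1 : ℕ) : Fin (2 * n + 1)))
        + v (i + ((2 * j + 1 : ℕ) : Fin (2 * n + 1)) + 1)))
      - ∑ j ∈ Finset.range n, (v (i + ((2 * j + 2 : ℕ) : Fin (2 * n + 1)))
        + v (i + ((2 * j + 2 : ℕ) : Fin (2 * n + 1)) + 1)))
    = v (i + 1) - v i := by
  rw [← Finset.sum_sub_distrib]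
  have h1 : ∀ j ∈ Finset.range n,
      (v (i + ((2 * j + 1 : ℕ) : Fin (2 * n + 1)))
        + v (i + ((2 * j + 1 : ℕ) : Fin (2 * n + 1)) + 1))
      - (v (i + ((2 * j + 2 : ℕ) : Fin (2 * n + 1)))
        + v (i + ((2 * j + 2 : ℕ) : Fin (2 * n + 1)) + 1))
      = (fun k => v (i + ((2 * k + 1 : ℕ) : Fin (2 * n + 1)))) j
        - (fun k => v (i + ((2 * k + 1 : ℕ) : Fin (2 * n + 1)))) (j + 1) := by
    intro j _
    have e1 : i + ((2 * j + 1 : ℕ) : Fin (2 * n + 1)) + 1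
        = i + ((2 * j + 2 : ℕ) : Fin (2 * n + 1)) :=
          (add_assoc _ _ _).trans (congrArg (i + ·) (Nat.cast_succ _).symm)
    have e2 : i + ((2 * j + 2 : ℕ) : Fin (2 * n + 1)) + 1
        = i + ((2 * (j + 1) + 1 : ℕ) : Fin (2 * n + 1)) :=
          (add_assoc _ _ _).trans (congrArg (i + ·) (Nat.cast_succ _).symm)
    simp only [e1, e2]
    ring
  rw [Finset.sum_congr rfl h1, Finset.sum_range_sub']
  have en : ((2 * n + 1 : ℕ) : Fin (2 * n + 1)) = 0 := Fin.natCast_self _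
  norm_num [en]

private lemma sum_shift (m : ℕ) [NeZero m] (v : Fin m → ℂ) :
    ∑ i, v (i + 1) = ∑ i, v i :=
  Fintype.sum_equiv (Equiv.addRight 1) _ _ (fun _ => rfl)
/-- Equivalence between the (2n+1)-cyclic dressing chain with shift Δ
(together with its first integral) and the A_{2n}-Painlevé system (together with its
normalizations), under the change of variables
`f i z = c (w i (cz) + w (i+1) (cz))`, `α i = c² a i`, `c² = −1/Δ`. -/
theorem dressing_chain_iff_painleve (n : ℕ) (hn : 1 ≤ n) (Δ c : ℂ) (hΔ : Δ ≠ 0)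
    (hc : c ^ 2 = -1 / Δ)
    (D : Set ℂ) (hD : IsOpen D)
    (w : Fin (2 * n + 1) → ℂ → ℂ) (hw : ∀ i, DifferentiableOn ℂ (w i) D)
    (a : Fin (2 * n + 1) → ℂ)
    (f : Fin (2 * n + 1) → ℂ → ℂ) (α : Fin (2 * n + 1) → ℂ)
    (hf : ∀ i z, f i z = c * (w i (c * z) + w (i + 1) (c * z)))
    (hα : ∀ i, α i = c ^ 2 * a i) :
    ((∀ z ∈ D, ∀ i : Fin (2 * n + 1),
        deriv (fun t => w i t + w (i + 1) t) z + (w (i + 1) z) ^ 2 - (w i z) ^ 2 = a i) ∧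
      (∑ i, a i = -Δ) ∧
      (∀ z ∈ D, ∑ i, w i z = -Δ * z / 2)) ↔
    ((∀ z : ℂ, c * z ∈ D → ∀ i : Fin (2 * n + 1),
        deriv (f i) z + f i z *
          ((∑ j ∈ Finset.range n, f (i + ((2 * j + 1 : ℕ) : Fin (2 * n + 1))) z) -
           (∑ j ∈ Finset.range n, f (i + ((2 * j + 2 : ℕ) : Fin (2 * n + 1))) z)) = α i) ∧
      (∀ z : ℂ, c * z ∈ D → ∑ i, f i z = z) ∧
      (∑ i, α i = 1)) := by
  have hc0 : c ≠ 0 := by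
    intro h
    rw [h] at hc
    have h2 : (-1 : ℂ) / Δ = 0 := by rw [← hc]; ring
    rw [div_eq_zero_iff] at h2
    simp [hΔ] at h2
  have hc2 : (c : ℂ) ^ 2 ≠ 0 := pow_ne_zero 2 hc0
  have hΔc : Δ * c ^ 2 = -1 := by
    rw [hc]; field_simp
  -- pointwise equivalence of the differential equations
  have key : ∀ z : ℂ, c * z ∈ D → ∀ i : Fin (2 * n + 1),
      ((deriv (fun t => w i t + w (i + 1) t) (c * z) + (w (i + 1) (c * z)) ^ 2
          - (w i (c * z)) ^ 2 = a i) ↔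
        (deriv (f i) z + f i z *
          ((∑ j ∈ Finset.range n, f (i + ((2 * j + 1 : ℕ) : Fin (2 * n + 1))) z) -
           (∑ j ∈ Finset.range n, f (i + ((2 * j + 2 : ℕ) : Fin (2 * n + 1))) z)) = α i)) := by
    intro z hz i
    set u : ℂ := c * z with hu
    have hmem : D ∈ nhds u := hD.mem_nhds hz
    have hdi : DifferentiableAt ℂ (w i) u := ((hw i).differentiableAt hmem)
    have hdi1 : DifferentiableAt ℂ (w (i + 1)) u := ((hw (i + 1)).differentiableAt hmem)
    have hcz : HasDerivAt (fun t : ℂ => c * t) c z := by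
      simpa using (hasDerivAt_id z).const_mul c
    have h1 : HasDerivAt (fun t => w i (c * t)) (deriv (w i) u * c) z :=
      HasDerivAt.comp z hdi.hasDerivAt hcz
    have h2 : HasDerivAt (fun t => w (i + 1) (c * t)) (deriv (w (i + 1)) u * c) z :=
      HasDerivAt.comp z hdi1.hasDerivAt hcz
    have hfi : f i = fun t => c * (w i (c * t) + w (i + 1) (c * t)) := funext (hf i)
    have hderf : deriv (f i) z = c ^ 2 * (deriv (w i) u + deriv (w (i + 1)) u) := by
      rw [hfi]
      have := ((h1.add h2).const_mul c).deriv
      exact this.trans (by ring)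
    have hdsum : deriv (fun t => w i t + w (i + 1) t) u
        = deriv (w i) u + deriv (w (i + 1)) u := deriv_fun_add hdi hdi1
    -- the telescoping difference
    have htel : ((∑ j ∈ Finset.range n, f (i + ((2 * j + 1 : ℕ) : Fin (2 * n + 1))) z) -
           (∑ j ∈ Finset.range n, f (i + ((2 * j + 2 : ℕ) : Fin (2 * n + 1))) z))
        = c * (w (i + 1) u - w i u) := by
      simp only [hf]
      rw [← Finset.mul_sum, ← Finset.mul_sum, ← mul_sub]
      rw [tele_sum n i (fun k => w k u)]
    rw [hderf, hdsum, htel, hf i z, hα i]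
    constructor
    · intro h
      rw [← h]; ring
    · intro h
      apply mul_left_cancel₀ hc2
      rw [← h]; ring
  constructor
  · rintro ⟨hde, hsa, hsw⟩
    refine ⟨fun z hz i => (key z hz i).mp (hde (c * z) hz i), fun z hz => ?_, ?_⟩
    · have h1 : ∑ i, f i z = c * (∑ i, w i (c * z) + ∑ i, w (i + 1) (c * z)) := by
        simp only [hf]
        rw [← Finset.mul_sum, Finset.sum_add_distrib]
      have hsh : ∑ i : Fin (2 * n + 1), w (i + 1) (c * z) = ∑ i, w i (c * z) :=
        Fintype.sum_equiv (Equiv.addRight 1) _ _ (fun _ => rfl)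
      rw [h1, hsh, hsw (c * z) hz]
      linear_combination (-z) * hΔc
    · simp only [hα]
      rw [← Finset.mul_sum, hsa]
      linear_combination -hΔc
  · rintro ⟨hde, hsf, hsα⟩
    have hsurj : ∀ u ∈ D, c * (c⁻¹ * u) = u := by
      intro u _; field_simp
    refine ⟨fun u hu i => ?_, ?_, fun u hu => ?_⟩
    · have hz : c * (c⁻¹ * u) ∈ D := by rw [hsurj u hu]; exact hu
      have := (key (c⁻¹ * u) hz i).mpr (hde (c⁻¹ * u) hz i)
      rwa [hsurj u hu] at this
    · have h := hsα
      simp only [hα] at h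
      rw [← Finset.mul_sum] at h
      have : c ^ 2 * ∑ i, a i = c ^ 2 * (-Δ) := by
        rw [h]; linear_combination hΔc
      exact mul_left_cancel₀ hc2 this
    · have hz : c * (c⁻¹ * u) ∈ D := by rw [hsurj u hu]; exact hu
      have h := hsf (c⁻¹ * u) hz
      have h1 : ∑ i, f i (c⁻¹ * u) = c * (∑ i, w i u + ∑ i, w (i + 1) u) := by
        simp only [hf, hsurj u hu]
        rw [← Finset.mul_sum, Finset.sum_add_distrib]
      have hsh : ∑ i : Fin (2 * n + 1), w (i + 1) u = ∑ i, w i u :=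
        Fintype.sum_equiv (Equiv.addRight 1) _ _ (fun _ => rfl)
      rw [h1, hsh] at h
      have h2 : c * (c * (∑ i, w i u + ∑ i, w i u)) = u := by
        rw [h, mul_inv_cancel_left₀ hc0]
      linear_combination (-Δ / 2) * h2 + (∑ i, w i u) * hΔc
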